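/- For every real τ > 0, the standard expected improvement satisfies (τ⁻² − 3τ⁻⁴)·φ(τ) ≤ ei(τ) ≤ τ⁻²·φ(τ). -/

import Mathlib

open MeasureTheory

/-- The standard normal density `φ(x) = (2π)^{-1/2} exp(-x²/2)`. -/
noncomputable def stdNormalPDF (x : ℝ) : ℝ :=
  (Real.sqrt (2 * Real.pi))⁻¹ * Real.exp (-x ^ 2 / 2)

/-- The standard normal complementary CDF `Φᶜ(x) = ∫_x^∞ φ(u) du`. -/
noncomputable def stdNormalCCDF (x : ℝ) : ℝ :=
  ∫ u in Set.Ioi x, stdNormalPDF u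

/-- The standard expected improvement `ei(x) = φ(x) - x·Φᶜ(x)`. -/
noncomputable def stdEI (x : ℝ) : ℝ :=
  stdNormalPDF x - x * stdNormalCCDF x

lemma pdf_pos (x : ℝ) : 0 < stdNormalPDF x := by
  unfold stdNormalPDF
  positivity

lemma pdf_hasDerivAt (u : ℝ) : HasDerivAt stdNormalPDF (-u * stdNormalPDF u) u := by
  have h1 : HasDerivAt (fun x : ℝ => -x ^ 2 / 2) (-u) u := by
    have := ((hasDerivAt_pow 2 u).neg.div_const 2)
    refine this.congr_deriv ?_
    norm_num
    ring
  have h2 := h1.exp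
  have h3 := h2.const_mul (Real.sqrt (2 * Real.pi))⁻¹
  refine h3.congr_deriv ?_
  unfold stdNormalPDF
  ring

lemma pdf_tendsto : Filter.Tendsto stdNormalPDF Filter.atTop (nhds 0) := by
  unfold stdNormalPDF
  rw [show (0:ℝ) = (Real.sqrt (2 * Real.pi))⁻¹ * 0 by ring]
  refine Filter.Tendsto.const_mul _ ?_
  refine Real.tendsto_exp_atBot.comp ?_
  have : Filter.Tendsto (fun x : ℝ => x ^ 2 / 2) Filter.atTop Filter.atTop := by
    exact (Filter.tendsto_pow_atTop (by norm_num)).atTop_div_const (by norm_num)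
  rw [show (fun k : ℝ => -k ^ 2 / 2) = (fun k : ℝ => -(k ^ 2 / 2)) from funext fun k => by ring]
  exact Filter.tendsto_neg_atBot_iff.mpr this

lemma pdf_integrableOn (a : ℝ) : IntegrableOn stdNormalPDF (Set.Ioi a) := by
  have h : Integrable stdNormalPDF := by
    have := (integrable_exp_neg_mul_sq (b := (1:ℝ)/2) (by norm_num)).const_mul
      (Real.sqrt (2 * Real.pi))⁻¹
    convert this using 2 with x
    unfold stdNormalPDF
    ring_nf
  exact h.integrableOn

lemma aux_integrableOn (a : ℝ) (ha : 0 < a) (k : ℕ) :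
    IntegrableOn (fun u => stdNormalPDF u * (u ^ k)⁻¹) (Set.Ioi a) := by
  refine Integrable.mono' ((pdf_integrableOn a).mul_const (a ^ k)⁻¹) ?_ ?_
  · refine ContinuousOn.aestronglyMeasurable ?_ measurableSet_Ioi
    refine ContinuousOn.mul ?_ ?_
    · exact (Continuous.continuousOn (by unfold stdNormalPDF; continuity))
    · refine ContinuousOn.inv₀ (by fun_prop) ?_
      intro x hx
      have hx0 : 0 < x := ha.trans (by exact hx)
      exact pow_ne_zero k hx0.ne'
  · filter_upwards [ae_restrict_mem measurableSet_Ioi] with u hu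
    have hua : a < u := hu
    have h0 : 0 < u := ha.trans hua
    rw [Real.norm_eq_abs, abs_of_nonneg (mul_nonneg (pdf_pos u).le (by positivity))]
    have hpow : a ^ k ≤ u ^ k := pow_le_pow_left₀ ha.le hua.le k
    have : (u ^ k)⁻¹ ≤ (a ^ k)⁻¹ := by
      apply inv_anti₀ (by positivity) hpow
    exact mul_le_mul_of_nonneg_left this (pdf_pos u).le

lemma tendsto_pdf_mul_inv (c : ℝ) (k : ℕ) (hk : 0 < k) :
    Filter.Tendsto (fun u => stdNormalPDF u * (c * (u ^ k)⁻¹)) Filter.atTop (nhds 0) := by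
  rw [show (0:ℝ) = 0 * (c * 0) by ring]
  refine pdf_tendsto.mul (Filter.Tendsto.const_mul _ ?_)
  exact ((Filter.tendsto_pow_atTop hk.ne').inv_tendsto_atTop)

/-- Mills ratio lower bound: `φ(τ)(1/τ - 1/τ³) ≤ Φᶜ(τ)`. -/
lemma mills_lower (τ : ℝ) (hτ : 0 < τ) :
    stdNormalPDF τ * (τ⁻¹ - (τ ^ 3)⁻¹) ≤ stdNormalCCDF τ := by
  set F : ℝ → ℝ := fun u => -(stdNormalPDF u * (u⁻¹ - (u ^ 3)⁻¹)) with hF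
  have hderiv : ∀ u ∈ Set.Ici τ, HasDerivAt F
      (stdNormalPDF u - stdNormalPDF u * (3 * (u ^ 4)⁻¹)) u := by
    intro u hu
    have hu0 : u ≠ 0 := (hτ.trans_le hu).ne'
    have h1 : HasDerivAt (fun x : ℝ => x⁻¹ - (x ^ 3)⁻¹)
        (-(u ^ 2)⁻¹ - (-(3 * u ^ 2) / (u ^ 3) ^ 2)) u :=
      (hasDerivAt_inv hu0).sub (((hasDerivAt_pow 3 u).inv (pow_ne_zero 3 hu0)).congr_deriv
        (by norm_num))
    have h2 := ((pdf_hasDerivAt u).mul h1).neg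
    refine h2.congr_deriv ?_
    have := pdf_pos u
    field_simp
    ring
  have hint : IntegrableOn (fun u => stdNormalPDF u - stdNormalPDF u * (3 * (u ^ 4)⁻¹))
      (Set.Ioi τ) := by
    refine (pdf_integrableOn τ).sub ?_
    have := (aux_integrableOn τ hτ 4).const_mul 3
    exact this.congr (ae_of_all _ fun u => by ring)
  have htend : Filter.Tendsto F Filter.atTop (nhds 0) := by
    have h1 := tendsto_pdf_mul_inv 1 1 one_pos
    have h2 := tendsto_pdf_mul_inv 1 3 (by norm_num)
    have := (h1.sub h2).neg
    simp only [neg_zero, sub_zero, one_mul] at this ⊢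
    refine this.congr (fun u => ?_)
    simp [hF, mul_sub, pow_one]
  have heq := integral_Ioi_of_hasDerivAt_of_tendsto' hderiv hint htend
  have hle : ∫ u in Set.Ioi τ, (stdNormalPDF u - stdNormalPDF u * (3 * (u ^ 4)⁻¹)) ≤
      stdNormalCCDF τ := by
    unfold stdNormalCCDF
    refine setIntegral_mono_on hint (pdf_integrableOn τ) measurableSet_Ioi ?_
    intro u hu
    have h0 : 0 < u := hτ.trans hu
    have : 0 ≤ stdNormalPDF u * (3 * (u ^ 4)⁻¹) := by
      have := (pdf_pos u).le; positivity
    linarith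
  rw [heq] at hle
  simp only [hF, zero_sub, neg_neg] at hle
  exact hle

/-- Mills ratio upper bound: `Φᶜ(τ) ≤ φ(τ)(1/τ - 1/τ³ + 3/τ⁵)`. -/
lemma mills_upper (τ : ℝ) (hτ : 0 < τ) :
    stdNormalCCDF τ ≤ stdNormalPDF τ * (τ⁻¹ - (τ ^ 3)⁻¹ + 3 * (τ ^ 5)⁻¹) := by
  set F : ℝ → ℝ := fun u => -(stdNormalPDF u * (u⁻¹ - (u ^ 3)⁻¹ + 3 * (u ^ 5)⁻¹)) with hF
  have hderiv : ∀ u ∈ Set.Ici τ, HasDerivAt F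
      (stdNormalPDF u + stdNormalPDF u * (15 * (u ^ 6)⁻¹)) u := by
    intro u hu
    have hu0 : u ≠ 0 := (hτ.trans_le hu).ne'
    have h1 : HasDerivAt (fun x : ℝ => x⁻¹ - (x ^ 3)⁻¹ + 3 * (x ^ 5)⁻¹)
        ((-(u ^ 2)⁻¹ - (-(3 * u ^ 2) / (u ^ 3) ^ 2)) + 3 * (-(5 * u ^ 4) / (u ^ 5) ^ 2)) u := by
      refine HasDerivAt.add ?_ (HasDerivAt.const_mul 3 ?_)
      · exact (hasDerivAt_inv hu0).sub (((hasDerivAt_pow 3 u).inv (pow_ne_zero 3 hu0)).congr_deriv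
          (by norm_num))
      · exact ((hasDerivAt_pow 5 u).inv (pow_ne_zero 5 hu0)).congr_deriv (by norm_num)
    have h2 := ((pdf_hasDerivAt u).mul h1).neg
    refine h2.congr_deriv ?_
    field_simp
    ring
  have hint : IntegrableOn (fun u => stdNormalPDF u + stdNormalPDF u * (15 * (u ^ 6)⁻¹))
      (Set.Ioi τ) := by
    refine (pdf_integrableOn τ).add ?_
    have := (aux_integrableOn τ hτ 6).const_mul 15
    exact this.congr (ae_of_all _ fun u => by ring)
  have htend : Filter.Tendsto F Filter.atTop (nhds 0) := by
    have h1 := tendsto_pdf_mul_inv 1 1 one_pos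
    have h2 := tendsto_pdf_mul_inv 1 3 (by norm_num)
    have h3 := tendsto_pdf_mul_inv 3 5 (by norm_num)
    have := ((h1.sub h2).add h3).neg
    simp only [neg_zero, sub_zero, add_zero, one_mul] at this ⊢
    refine this.congr (fun u => ?_)
    simp [hF, mul_sub, mul_add, pow_one]
  have heq := integral_Ioi_of_hasDerivAt_of_tendsto' hderiv hint htend
  have hle : stdNormalCCDF τ ≤
      ∫ u in Set.Ioi τ, (stdNormalPDF u + stdNormalPDF u * (15 * (u ^ 6)⁻¹)) := by
    unfold stdNormalCCDF
    refine setIntegral_mono_on (pdf_integrableOn τ) hint measurableSet_Ioi ?_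
    intro u hu
    have h0 : 0 < u := hτ.trans hu
    have : 0 ≤ stdNormalPDF u * (15 * (u ^ 6)⁻¹) := by
      have := (pdf_pos u).le; positivity
    linarith
  rw [heq] at hle
  simp only [hF, zero_sub, neg_neg] at hle
  exact hle

/-- Bounds on the expected improvement (Lemma `bound_ei`). -/
theorem stmt4 (τ : ℝ) (hτ : 0 < τ) :
    ((τ ^ 2)⁻¹ - 3 * (τ ^ 4)⁻¹) * stdNormalPDF τ ≤ stdEI τ ∧
      stdEI τ ≤ (τ ^ 2)⁻¹ * stdNormalPDF τ := by
  have h1 := mills_lower τ hτ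
  have h2 := mills_upper τ hτ
  have hp := pdf_pos τ
  unfold stdEI
  have hτ2 : (τ:ℝ) ≠ 0 := hτ.ne'
  constructor
  · have := mul_le_mul_of_nonneg_left h2 hτ.le
    have he : τ * (stdNormalPDF τ * (τ⁻¹ - (τ ^ 3)⁻¹ + 3 * (τ ^ 5)⁻¹)) =
        (1 - (τ ^ 2)⁻¹ + 3 * (τ ^ 4)⁻¹) * stdNormalPDF τ := by
      field_simp
    nlinarith [this, he]
  · have := mul_le_mul_of_nonneg_left h1 hτ.le
    have he : τ * (stdNormalPDF τ * (τ⁻¹ - (τ ^ 3)⁻¹)) =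
        (1 - (τ ^ 2)⁻¹) * stdNormalPDF τ := by
      field_simp
    nlinarith [this, he]
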